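/- Existence of a minimizing curve (metric version of Lemma 4.3): Let (M, d) be a metric space and τ : M → ℝ a 1-Lipschitz function such that the preimage under τ of every compact interval is a compact subset of M. Suppose p, q ∈ M satisfy d(p,q) = τ(q) − τ(p), and suppose that for every j ∈ ℕ there is a continuous curve β_j : [0,1] → M with β_j(0) = p, β_j(1) = q whose d-rectifiable length is less than d(p,q) + 1/j. Then there exists a continuous curve C : [0,1] → M with C(0) = p, C(1) = q and d(C(s), C(s')) = τ(C(s')) − τ(C(s)) for all 0 ≤ s ≤ s' ≤ 1. -/

import Mathlib

/-- Existence of a minimizing curve (metric version of Lemma 4.3).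
`(M,d)` is a metric space, `τ : M → ℝ` is `1`-Lipschitz with compact preimages of
compact intervals.  If `d(p,q) = τ(q) − τ(p)` and for every `j ≥ 1` there is a
continuous curve from `p` to `q` of `d`-rectifiable length (total variation) less than
`d(p,q) + 1/j`, then there is a continuous curve `C` from `p` to `q` with
`d(C(s), C(s')) = τ(C(s')) − τ(C(s))` for all `0 ≤ s ≤ s' ≤ 1`. -/
theorem exists_minimizing_curve {M : Type*} [MetricSpace M] (τ : M → ℝ)
    (hlip : LipschitzWith 1 τ)
    (hproper : ∀ a b : ℝ, IsCompact (τ ⁻¹' Set.Icc a b))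
    (p q : M) (hpq : dist p q = τ q - τ p)
    (hβ : ∀ j : ℕ, 1 ≤ j → ∃ β : ℝ → M, ContinuousOn β (Set.Icc 0 1) ∧
      β 0 = p ∧ β 1 = q ∧
      eVariationOn β (Set.Icc 0 1) < ENNReal.ofReal (dist p q + 1 / (j : ℝ))) :
    ∃ C : ℝ → M, ContinuousOn C (Set.Icc 0 1) ∧ C 0 = p ∧ C 1 = q ∧
      ∀ s ∈ Set.Icc (0:ℝ) 1, ∀ s' ∈ Set.Icc (0:ℝ) 1, s ≤ s' →
        dist (C s) (C s') = τ (C s') - τ (C s) := by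
  classical
  have hDnn : (0:ℝ) ≤ dist p q := dist_nonneg
  have hτpq : τ p ≤ τ q := by linarith [hpq, hDnn]
  set D : ℝ := dist p q with hD
  -- choose the curves
  choose B hBcont hB0 hB1 hBvar using fun n : ℕ => hβ (n + 1) (Nat.le_add_left 1 n)
  -- continuity of τ ∘ B n
  have hτBcont : ∀ n, ContinuousOn (fun s => τ (B n s)) (Set.Icc (0:ℝ) 1) :=
    fun n => hlip.continuous.comp_continuousOn (hBcont n)
  -- level-hitting sets
  set S : ℕ → ℝ → Set ℝ := fun n t => {s | s ∈ Set.Icc (0:ℝ) 1 ∧ τ (B n s) = t} with hS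
  have hSsub : ∀ n t, S n t ⊆ Set.Icc (0:ℝ) 1 := fun n t s hs => hs.1
  have hSbdd : ∀ n t, BddBelow (S n t) := fun n t =>
    ⟨0, fun s hs => hs.1.1⟩
  have hSne : ∀ n, ∀ t ∈ Set.Icc (τ p) (τ q), (S n t).Nonempty := by
    intro n t ht
    have hIVT := intermediate_value_Icc (by norm_num : (0:ℝ) ≤ 1) (hτBcont n)
    have ht' : t ∈ Set.Icc (τ (B n 0)) (τ (B n 1)) := by
      rw [hB0 n, hB1 n]; exact ht
    obtain ⟨s, hs, hst⟩ := hIVT ht'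
    exact ⟨s, hs, hst⟩
  have hSclosed : ∀ n t, IsClosed (S n t) := by
    intro n t
    have : S n t = Set.Icc (0:ℝ) 1 ∩ (fun s => τ (B n s)) ⁻¹' {t} := by
      ext s
      simp only [hS, Set.mem_setOf_eq, Set.mem_inter_iff, Set.mem_preimage,
        Set.mem_singleton_iff]
    rw [this]
    exact (hτBcont n).preimage_isClosed_of_isClosed isClosed_Icc isClosed_singleton
  -- first hitting time and the level curve
  set g : ℕ → ℝ → ℝ := fun n t => sInf (S n t) with hg
  set γ : ℕ → ℝ → M := fun n t => B n (g n t) with hγ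
  have hgmem : ∀ n, ∀ t ∈ Set.Icc (τ p) (τ q), g n t ∈ S n t := by
    intro n t ht
    exact (hSclosed n t).csInf_mem (hSne n t ht) (hSbdd n t)
  have hγτ : ∀ n, ∀ t ∈ Set.Icc (τ p) (τ q), τ (γ n t) = t := by
    intro n t ht; exact (hgmem n t ht).2
  have hgIcc : ∀ n, ∀ t ∈ Set.Icc (τ p) (τ q), g n t ∈ Set.Icc (0:ℝ) 1 := by
    intro n t ht; exact (hgmem n t ht).1
  -- monotonicity of the first hitting time
  have hgmono : ∀ n, ∀ t ∈ Set.Icc (τ p) (τ q), ∀ t' ∈ Set.Icc (τ p) (τ q),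
      t ≤ t' → g n t ≤ g n t' := by
    intro n t ht t' ht' htt'
    have hg' := hgmem n t' ht'
    have hs'Icc : g n t' ∈ Set.Icc (0:ℝ) 1 := hg'.1
    have hIVT := intermediate_value_Icc hs'Icc.1
      ((hτBcont n).mono (Set.Icc_subset_Icc le_rfl hs'Icc.2))
    have ht'' : t ∈ Set.Icc (τ (B n 0)) (τ (B n (g n t'))) := by
      rw [hB0 n, hg'.2]; exact ⟨ht.1, htt'⟩
    obtain ⟨s, hs, hst⟩ := hIVT ht''
    have hsS : s ∈ S n t := ⟨⟨hs.1, hs.2.trans hs'Icc.2⟩, hst⟩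
    exact (csInf_le (hSbdd n t) hsS).trans hs.2
  -- key four-point estimate
  have hkey : ∀ n, ∀ t ∈ Set.Icc (τ p) (τ q), ∀ t' ∈ Set.Icc (τ p) (τ q), t ≤ t' →
      dist p (γ n t) + dist (γ n t) (γ n t') + dist (γ n t') q ≤ D + 1 / (n + 1 : ℝ) := by
    intro n t ht t' ht' htt'
    set u : ℕ → ℝ := fun i => if i = 0 then 0 else if i = 1 then g n t
      else if i = 2 then g n t' else 1 with hu
    have humono : Monotone u := by
      apply monotone_nat_of_le_succ
      intro i
      match i with
      | 0 => simpa [hu] using (hgIcc n t ht).1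
      | 1 => simpa [hu] using hgmono n t ht t' ht' htt'
      | 2 => simpa [hu] using (hgIcc n t' ht').2
      | (k+3) => simp [hu]
    have humem : ∀ i, u i ∈ Set.Icc (0:ℝ) 1 := by
      intro i
      match i with
      | 0 => simp [hu]
      | 1 => simpa [hu] using hgIcc n t ht
      | 2 => simpa [hu] using hgIcc n t' ht'
      | (k+3) => simp [hu]
    have hsum := eVariationOn.sum_le (f := B n) (n := 3) humono humem
    have hsum3 : edist (γ n t) p + edist (γ n t') (γ n t) + edist q (γ n t')
        ≤ eVariationOn (B n) (Set.Icc 0 1) := by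
      have : ∑ i ∈ Finset.range 3, edist (B n (u (i + 1))) (B n (u i))
          = edist (γ n t) p + edist (γ n t') (γ n t) + edist q (γ n t') := by
        rw [Finset.sum_range_succ, Finset.sum_range_succ, Finset.sum_range_one]
        simp [hu, hγ, hB0 n, hB1 n]
      rw [← this]; exact hsum
    have hlt := lt_of_le_of_lt hsum3 (hBvar n)
    have hposb : (0:ℝ) < D + 1 / ((n:ℝ) + 1) := by
      have : (0:ℝ) < 1 / ((n:ℝ) + 1) := by positivity
      linarith
    rw [edist_dist, edist_dist, edist_dist, ← ENNReal.ofReal_add dist_nonneg dist_nonneg,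
      ← ENNReal.ofReal_add (by positivity) dist_nonneg] at hlt
    have hcast : ((n + 1 : ℕ) : ℝ) = (n : ℝ) + 1 := by push_cast; ring
    rw [hcast] at hlt
    have := (ENNReal.ofReal_lt_ofReal_iff hposb).mp hlt
    rw [dist_comm (γ n t) p, dist_comm (γ n t') (γ n t), dist_comm q (γ n t')] at this
    linarith
  -- lower bounds from 1-Lipschitzness of τ
  have hlow : ∀ (x y : M), τ y - τ x ≤ dist x y := by
    intro x y
    have := hlip.dist_le_mul y x
    rw [NNReal.coe_one, one_mul, Real.dist_eq] at this
    calc τ y - τ x ≤ |τ y - τ x| := le_abs_self _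
    _ ≤ dist y x := this
    _ = dist x y := dist_comm y x
  -- individual estimates
  have hest : ∀ n, ∀ t ∈ Set.Icc (τ p) (τ q), ∀ t' ∈ Set.Icc (τ p) (τ q), t ≤ t' →
      dist p (γ n t) ≤ t - τ p + 1 / (n + 1 : ℝ) ∧
      dist (γ n t) (γ n t') ≤ t' - t + 1 / (n + 1 : ℝ) ∧
      dist (γ n t') q ≤ τ q - t' + 1 / (n + 1 : ℝ) := by
    intro n t ht t' ht' htt'
    have h4 := hkey n t ht t' ht' htt'
    have l1 : t - τ p ≤ dist p (γ n t) := by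
      have := hlow p (γ n t); rw [hγτ n t ht] at this; exact this
    have l2 : t' - t ≤ dist (γ n t) (γ n t') := by
      have := hlow (γ n t) (γ n t'); rw [hγτ n t ht, hγτ n t' ht'] at this; exact this
    have l3 : τ q - t' ≤ dist (γ n t') q := by
      have := hlow (γ n t') q; rw [hγτ n t' ht'] at this; exact this
    refine ⟨by linarith [hpq], by linarith [hpq], by linarith [hpq]⟩
  -- ultrafilter limit
  let F : Ultrafilter ℕ := Ultrafilter.of Filter.atTop
  have hFle : (F : Filter ℕ) ≤ Filter.atTop := Ultrafilter.of_le _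
  have hmemK : ∀ n, ∀ t ∈ Set.Icc (τ p) (τ q), γ n t ∈ τ ⁻¹' Set.Icc (τ p) (τ q) := by
    intro n t ht
    simp only [Set.mem_preimage, hγτ n t ht]
    exact ht
  have hexists : ∀ t : ℝ, ∃ x : M, t ∈ Set.Icc (τ p) (τ q) →
      Filter.Tendsto (fun n => γ n t) (F : Filter ℕ) (nhds x) := by
    intro t
    by_cases ht : t ∈ Set.Icc (τ p) (τ q)
    · have hle : (F.map (fun n => γ n t) : Filter M) ≤ Filter.principal (τ ⁻¹' Set.Icc (τ p) (τ q)) := by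
        rw [Filter.le_principal_iff]
        exact Filter.mem_map.mpr (Filter.Eventually.of_forall (fun n => hmemK n t ht))
      obtain ⟨x, -, hx⟩ := (hproper (τ p) (τ q)).ultrafilter_le_nhds (F.map (fun n => γ n t)) hle
      exact ⟨x, fun _ => hx⟩
    · exact ⟨p, fun h => absurd h ht⟩
  choose c hc using hexists
  -- the vanishing error sequence
  have herr : Filter.Tendsto (fun n : ℕ => 1 / ((n:ℝ) + 1)) (F : Filter ℕ) (nhds 0) :=
    (tendsto_one_div_add_atTop_nhds_zero_nat).mono_left hFle
  -- the exact limit distance computation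
  have hsqueeze : ∀ (a : ℝ) (f : ℕ → ℝ), (∀ n, a ≤ f n) → (∀ n, f n ≤ a + 1 / ((n:ℝ) + 1)) →
      Filter.Tendsto f (F : Filter ℕ) (nhds a) := by
    intro a f h1 h2
    have hupper : Filter.Tendsto (fun n : ℕ => a + 1 / ((n:ℝ) + 1)) (F : Filter ℕ) (nhds a) := by
      have := herr.const_add a
      simpa using this
    exact tendsto_of_tendsto_of_tendsto_of_le_of_le tendsto_const_nhds hupper h1 h2
  have hdistcc : ∀ t ∈ Set.Icc (τ p) (τ q), ∀ t' ∈ Set.Icc (τ p) (τ q), t ≤ t' →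
      dist (c t) (c t') = t' - t := by
    intro t ht t' ht' htt'
    have h1 : Filter.Tendsto (fun n => dist (γ n t) (γ n t')) (F : Filter ℕ)
        (nhds (dist (c t) (c t'))) := (hc t ht).dist (hc t' ht')
    have h2 : Filter.Tendsto (fun n => dist (γ n t) (γ n t')) (F : Filter ℕ) (nhds (t' - t)) := by
      apply hsqueeze
      · intro n
        have := hlow (γ n t) (γ n t'); rw [hγτ n t ht, hγτ n t' ht'] at this; exact this
      · intro n; exact (hest n t ht t' ht' htt').2.1
    exact tendsto_nhds_unique h1 h2
  have hdistp : ∀ t ∈ Set.Icc (τ p) (τ q), dist p (c t) = t - τ p := by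
    intro t ht
    have h1 : Filter.Tendsto (fun n => dist p (γ n t)) (F : Filter ℕ)
        (nhds (dist p (c t))) := Filter.Tendsto.dist tendsto_const_nhds (hc t ht)
    have h2 : Filter.Tendsto (fun n => dist p (γ n t)) (F : Filter ℕ) (nhds (t - τ p)) := by
      apply hsqueeze
      · intro n
        have := hlow p (γ n t); rw [hγτ n t ht] at this; exact this
      · intro n; exact (hest n t ht t ht le_rfl).1
    exact tendsto_nhds_unique h1 h2
  have hdistq : ∀ t ∈ Set.Icc (τ p) (τ q), dist (c t) q = τ q - t := by
    intro t ht
    have h1 : Filter.Tendsto (fun n => dist (γ n t) q) (F : Filter ℕ)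
        (nhds (dist (c t) q)) := Filter.Tendsto.dist (hc t ht) tendsto_const_nhds
    have h2 : Filter.Tendsto (fun n => dist (γ n t) q) (F : Filter ℕ) (nhds (τ q - t)) := by
      apply hsqueeze
      · intro n
        have := hlow (γ n t) q; rw [hγτ n t ht] at this; exact this
      · intro n; exact (hest n t ht t ht le_rfl).2.2
    exact tendsto_nhds_unique h1 h2
  have hτc : ∀ t ∈ Set.Icc (τ p) (τ q), τ (c t) = t := by
    intro t ht
    have h1 := hlow p (c t)
    have h2 := hlow (c t) q
    rw [hdistp t ht] at h1
    rw [hdistq t ht] at h2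
    linarith
  -- the final curve
  set ℓ : ℝ → ℝ := fun s => τ p + s * D with hℓ
  have hℓmem : ∀ s ∈ Set.Icc (0:ℝ) 1, ℓ s ∈ Set.Icc (τ p) (τ q) := by
    intro s hs
    constructor
    · simp only [hℓ]; nlinarith [hs.1, hDnn]
    · simp only [hℓ]; nlinarith [hs.1, hs.2, hDnn, hpq]
  refine ⟨fun s => c (ℓ s), ?_, ?_, ?_, ?_⟩
  · -- continuity
    apply LipschitzOnWith.continuousOn (K := Real.toNNReal D)
    apply LipschitzOnWith.of_dist_le_mul
    intro s hs s' hs'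
    rcases le_total s s' with h | h
    · have := hdistcc (ℓ s) (hℓmem s hs) (ℓ s') (hℓmem s' hs')
        (by simp only [hℓ]; nlinarith [hDnn])
      rw [this]
      have : ℓ s' - ℓ s = D * (s' - s) := by simp only [hℓ]; ring
      rw [this, Real.coe_toNNReal D hDnn, Real.dist_eq]
      have : |s - s'| = s' - s := by rw [abs_of_nonpos (by linarith)]; ring
      rw [this]
    · have := hdistcc (ℓ s') (hℓmem s' hs') (ℓ s) (hℓmem s hs)
        (by simp only [hℓ]; nlinarith [hDnn])
      rw [dist_comm, this]
      have : ℓ s - ℓ s' = D * (s - s') := by simp only [hℓ]; ring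
      rw [this, Real.coe_toNNReal D hDnn, Real.dist_eq]
      have : |s - s'| = s - s' := by rw [abs_of_nonneg (by linarith)]
      rw [this]
  · -- C 0 = p
    have h0 : ℓ 0 = τ p := by simp [hℓ]
    have := hdistp (ℓ 0) (hℓmem 0 (by norm_num))
    rw [h0] at this
    simp only [sub_self] at this
    show c (ℓ 0) = p
    rw [h0]
    exact (dist_eq_zero.mp this).symm
  · -- C 1 = q
    have h1 : ℓ 1 = τ q := by simp only [hℓ, one_mul]; linarith [hpq]
    have := hdistq (ℓ 1) (hℓmem 1 (by norm_num))
    rw [h1] at this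
    simp only [sub_self] at this
    show c (ℓ 1) = q
    rw [h1]
    exact dist_eq_zero.mp this
  · -- the isometry property
    intro s hs s' hs' hss'
    have hℓs := hℓmem s hs
    have hℓs' := hℓmem s' hs'
    have hℓle : ℓ s ≤ ℓ s' := by simp only [hℓ]; nlinarith [hDnn]
    rw [hdistcc (ℓ s) hℓs (ℓ s') hℓs' hℓle, hτc (ℓ s) hℓs, hτc (ℓ s') hℓs']
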